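/- The limit as α → +∞ of α^2 · ( α^3 [αφ(α) - (α^2+1)Φ(-α)] / φ(α) + 2 ) equals 12, where φ is the standard normal density and Φ the standard normal CDF. -/

import Mathlib

open MeasureTheory Filter

/-- Standard normal probability density function. -/
noncomputable def stdNormalPDF (x : ℝ) : ℝ :=
  (Real.sqrt (2 * Real.pi))⁻¹ * Real.exp (-(x ^ 2) / 2)

/-- Standard normal cumulative distribution function. -/
noncomputable def stdNormalCDF (x : ℝ) : ℝ :=
  ∫ t in Set.Iic x, stdNormalPDF t

lemma phi_pos (x : ℝ) : 0 < stdNormalPDF x := by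
  unfold stdNormalPDF
  positivity

lemma hasDerivAt_phi (x : ℝ) : HasDerivAt stdNormalPDF (-x * stdNormalPDF x) x := by
  unfold stdNormalPDF
  have h1 : HasDerivAt (fun x : ℝ => -(x ^ 2) / 2) (-x) x := by
    have := ((hasDerivAt_pow 2 x).neg).div_const 2
    refine this.congr_deriv ?_
    ring
  have h2 := (Real.hasDerivAt_exp (-(x ^ 2) / 2)).comp x h1
  have h3 := h2.const_mul (Real.sqrt (2 * Real.pi))⁻¹
  refine h3.congr_deriv ?_
  ring

lemma integrable_phi : Integrable stdNormalPDF := by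
  have h : Integrable (fun x : ℝ => Real.exp (-(1/2 : ℝ) * x ^ 2)) :=
    integrable_exp_neg_mul_sq (by norm_num)
  have := h.const_mul (Real.sqrt (2 * Real.pi))⁻¹
  refine this.congr ?_
  filter_upwards with x
  unfold stdNormalPDF
  ring_nf

lemma phi_tendsto_zero : Tendsto stdNormalPDF atTop (nhds 0) := by
  unfold stdNormalPDF
  rw [show (0:ℝ) = (Real.sqrt (2 * Real.pi))⁻¹ * 0 by ring]
  refine Tendsto.const_mul _ ?_
  refine Real.tendsto_exp_atBot.comp ?_
  have : Tendsto (fun x : ℝ => x ^ 2 / 2) atTop atTop :=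
    (tendsto_pow_atTop (by norm_num)).atTop_div_const (by norm_num)
  simpa [neg_div] using tendsto_neg_atBot_iff.mpr this

lemma continuous_phi : Continuous stdNormalPDF := by
  unfold stdNormalPDF; continuity

lemma phi_even (x : ℝ) : stdNormalPDF (-x) = stdNormalPDF x := by
  simp [stdNormalPDF, neg_pow]

lemma cdf_neg (α : ℝ) : stdNormalCDF (-α) = ∫ t in Set.Ioi α, stdNormalPDF t := by
  unfold stdNormalCDF
  have h := integral_comp_neg_Iic (-α) stdNormalPDF
  rw [neg_neg] at h
  rw [← h]
  exact setIntegral_congr_fun measurableSet_Iic (fun x _ => (phi_even x).symm)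

lemma hasDerivAt_F (t : ℝ) (ht : t ≠ 0) :
    HasDerivAt (fun t => -stdNormalPDF t * (t ^ 6 - t ^ 4 + 3 * t ^ 2 - 15) / t ^ 7)
      (stdNormalPDF t * (1 - 105 / t ^ 8)) t := by
  have hpoly : HasDerivAt (fun t : ℝ => t ^ 6 - t ^ 4 + 3 * t ^ 2 - 15)
      (6 * t ^ 5 - 4 * t ^ 3 + 3 * (2 * t)) t := by
    have h6 := hasDerivAt_pow 6 t
    have h4 := hasDerivAt_pow 4 t
    have h2 := (hasDerivAt_pow 2 t).const_mul (3 : ℝ)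
    have := ((h6.sub h4).add h2).sub_const (15 : ℝ)
    refine this.congr_deriv ?_
    norm_num
  have hN := ((hasDerivAt_phi t).neg).mul hpoly
  have hF := hN.div (hasDerivAt_pow 7 t) (pow_ne_zero 7 ht)
  refine hF.congr_deriv ?_
  simp only [Pi.mul_apply, Pi.neg_apply]
  set p := stdNormalPDF t with hp
  field_simp
  ring

lemma integrableOn_phi_div (α : ℝ) (hα : 0 < α) :
    IntegrableOn (fun t => stdNormalPDF t / t ^ 8) (Set.Ioi α) := by
  have hg : IntegrableOn (fun t => α⁻¹ ^ 8 * stdNormalPDF t) (Set.Ioi α) :=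
    (integrable_phi.const_mul _).integrableOn
  refine Integrable.mono hg ?_ ?_
  · exact ((continuous_phi.measurable.div (measurable_id.pow_const 8)).aestronglyMeasurable).restrict
  · rw [ae_restrict_iff' measurableSet_Ioi]
    filter_upwards with t ht
    have htpos : 0 < t := hα.trans ht
    have h1 : stdNormalPDF t / t ^ 8 ≤ α⁻¹ ^ 8 * stdNormalPDF t := by
      have h8 : α ^ 8 ≤ t ^ 8 := pow_le_pow_left₀ hα.le ht.le 8
      rw [div_le_iff₀ (by positivity), inv_pow]
      calc stdNormalPDF t = (α ^ 8)⁻¹ * stdNormalPDF t * α ^ 8 := by field_simp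
        _ ≤ (α ^ 8)⁻¹ * stdNormalPDF t * t ^ 8 :=
            mul_le_mul_of_nonneg_left h8 (mul_nonneg (by positivity) (phi_pos t).le)
    rw [Real.norm_eq_abs, Real.norm_eq_abs,
      abs_of_nonneg (div_nonneg (phi_pos t).le (by positivity)),
      abs_of_nonneg (mul_nonneg (by positivity) (phi_pos t).le)]
    exact h1

lemma tendsto_one_div_pow (n : ℕ) (hn : n ≠ 0) :
    Tendsto (fun t : ℝ => 1 / t ^ n) atTop (nhds 0) := by
  have := tendsto_inv_atTop_zero.comp (tendsto_pow_atTop (α := ℝ) hn)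
  simpa [one_div, Function.comp_def] using this


set_option maxHeartbeats 1000000 in
lemma hlim_F : Tendsto (fun t => -stdNormalPDF t * (t ^ 6 - t ^ 4 + 3 * t ^ 2 - 15) / t ^ 7)
    atTop (nhds 0) := by
  have h1 : ∀ᶠ t in atTop, -stdNormalPDF t * (t ^ 6 - t ^ 4 + 3 * t ^ 2 - 15) / t ^ 7 =
      -(stdNormalPDF t * (1/t - 1/t^3 + 3/t^5 - 15/t^7)) := by
    filter_upwards [eventually_gt_atTop 0] with t ht
    have htne : t ≠ 0 := ht.ne'
    field_simp
  rw [tendsto_congr' h1]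
  rw [show (0:ℝ) = -(0 * 0) by ring]
  refine Tendsto.neg (Tendsto.mul phi_tendsto_zero ?_)
  have hz := tendsto_one_div_pow
  have h15 : Tendsto (fun t : ℝ => 15 / t ^ 7) atTop (nhds 0) := by
    simpa [div_eq_mul_inv] using (hz 7 (by norm_num)).const_mul (15:ℝ)
  have h3 : Tendsto (fun t : ℝ => 3 / t ^ 5) atTop (nhds 0) := by
    simpa [div_eq_mul_inv] using (hz 5 (by norm_num)).const_mul (3:ℝ)
  have := (((hz 1 one_ne_zero).sub (hz 3 (by norm_num))).add h3).sub h15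
  simpa using this

set_option maxHeartbeats 1000000 in
lemma tail_eq (α : ℝ) (hα : 0 < α) :
    ∫ t in Set.Ioi α, stdNormalPDF t =
      stdNormalPDF α * (α ^ 6 - α ^ 4 + 3 * α ^ 2 - 15) / α ^ 7 +
        105 * ∫ t in Set.Ioi α, stdNormalPDF t / t ^ 8 := by
  have hne : α ≠ 0 := hα.ne'
  have hint8 := integrableOn_phi_div α hα
  have hintφ : IntegrableOn stdNormalPDF (Set.Ioi α) := integrable_phi.integrableOn
  have hintG : IntegrableOn (fun t => stdNormalPDF t * (1 - 105 / t ^ 8)) (Set.Ioi α) := by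
    refine IntegrableOn.congr_fun (hintφ.sub (hint8.const_mul 105))
      (fun t _ => ?_) measurableSet_Ioi
    simp only [Pi.sub_apply]
    ring
  have hcont : ContinuousWithinAt
      (fun t => -stdNormalPDF t * (t ^ 6 - t ^ 4 + 3 * t ^ 2 - 15) / t ^ 7) (Set.Ici α) α :=
    ((hasDerivAt_F α hne).continuousAt).continuousWithinAt
  have hderiv : ∀ x ∈ Set.Ioi α, HasDerivAt
      (fun t => -stdNormalPDF t * (t ^ 6 - t ^ 4 + 3 * t ^ 2 - 15) / t ^ 7)
      (stdNormalPDF x * (1 - 105 / x ^ 8)) x :=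
    fun x hx => hasDerivAt_F x (hα.trans hx).ne'
  have key := integral_Ioi_of_hasDerivAt_of_tendsto hcont hderiv hintG hlim_F
  have hsplit : ∫ t in Set.Ioi α, stdNormalPDF t * (1 - 105 / t ^ 8) =
      (∫ t in Set.Ioi α, stdNormalPDF t) - 105 * ∫ t in Set.Ioi α, stdNormalPDF t / t ^ 8 := by
    rw [← integral_const_mul, ← integral_sub hintφ (hint8.const_mul 105)]
    refine setIntegral_congr_fun measurableSet_Ioi (fun t _ => ?_)
    ring
  rw [hsplit] at key
  rw [zero_sub] at key
  have : (∫ t in Set.Ioi α, stdNormalPDF t) =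
      105 * (∫ t in Set.Ioi α, stdNormalPDF t / t ^ 8) +
        -(-stdNormalPDF α * (α ^ 6 - α ^ 4 + 3 * α ^ 2 - 15) / α ^ 7) := by
    linarith [key]
  rw [this]
  ring

lemma alg_identity (a p I : ℝ) (ha : a ≠ 0) (hp : p ≠ 0) :
    a ^ 2 * (a ^ 3 * (a * p - (a ^ 2 + 1) *
        (p * (a ^ 6 - a ^ 4 + 3 * a ^ 2 - 15) / a ^ 7 + 105 * I)) / p + 2) =
      12 + 15 / a ^ 2 - 105 * (a ^ 5 * (a ^ 2 + 1) * I / p) := by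
  field_simp
  ring

lemma integral_t_phi (α : ℝ) (hα : 0 < α) :
    (∫ t in Set.Ioi α, t * stdNormalPDF t) = stdNormalPDF α ∧
      IntegrableOn (fun t => t * stdNormalPDF t) (Set.Ioi α) := by
  have hderiv : ∀ x ∈ Set.Ioi α, HasDerivAt (fun t => -stdNormalPDF t)
      (x * stdNormalPDF x) x := by
    intro x _
    have := (hasDerivAt_phi x).neg
    refine this.congr_deriv ?_
    ring
  have hcont : ContinuousWithinAt (fun t => -stdNormalPDF t) (Set.Ici α) α :=
    (continuous_phi.neg).continuousWithinAt
  have hpos : ∀ x ∈ Set.Ioi α, 0 ≤ x * stdNormalPDF x := fun x hx =>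
    mul_nonneg (hα.trans hx).le (phi_pos x).le
  have hlim : Tendsto (fun t => -stdNormalPDF t) atTop (nhds 0) := by
    simpa using phi_tendsto_zero.neg
  constructor
  · have := integral_Ioi_of_hasDerivAt_of_nonneg hcont hderiv hpos hlim
    rw [this]; ring
  · exact integrableOn_Ioi_deriv_of_nonneg hcont hderiv hpos hlim

lemma I_le (α : ℝ) (hα : 1 ≤ α) :
    (∫ t in Set.Ioi α, stdNormalPDF t / t ^ 8) ≤ stdNormalPDF α / α ^ 9 := by
  have h0 : (0:ℝ) < α := lt_of_lt_of_le one_pos hα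
  obtain ⟨heq, hint⟩ := integral_t_phi α h0
  calc (∫ t in Set.Ioi α, stdNormalPDF t / t ^ 8)
      ≤ ∫ t in Set.Ioi α, t * stdNormalPDF t / α ^ 9 := by
        refine setIntegral_mono_on (integrableOn_phi_div α h0) (hint.div_const _)
          measurableSet_Ioi (fun t ht => ?_)
        have ht' : α < t := ht
        have htpos : 0 < t := h0.trans ht'
        rw [div_le_div_iff₀ (by positivity) (by positivity)]
        calc stdNormalPDF t * α ^ 9 ≤ stdNormalPDF t * t ^ 9 :=
              mul_le_mul_of_nonneg_left (pow_le_pow_left₀ h0.le ht'.le 9) (phi_pos t).le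
          _ = t * stdNormalPDF t * t ^ 8 := by ring
    _ = stdNormalPDF α / α ^ 9 := by rw [integral_div, heq]

set_option maxHeartbeats 1000000 in
theorem mills_ratio_third_order_residual :
    Tendsto
      (fun α : ℝ =>
        α ^ 2 *
          (α ^ 3 * (α * stdNormalPDF α - (α ^ 2 + 1) * stdNormalCDF (-α)) / stdNormalPDF α + 2))
      atTop (nhds 12) := by
  set R : ℝ → ℝ := fun α =>
    α ^ 5 * (α ^ 2 + 1) * (∫ t in Set.Ioi α, stdNormalPDF t / t ^ 8) / stdNormalPDF α with hR
  have heq : ∀ᶠ α in atTop,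
      α ^ 2 *
          (α ^ 3 * (α * stdNormalPDF α - (α ^ 2 + 1) * stdNormalCDF (-α)) / stdNormalPDF α + 2) =
        12 + 15 / α ^ 2 - 105 * R α := by
    filter_upwards [eventually_ge_atTop 1] with α hα
    have h0 : (0:ℝ) < α := lt_of_lt_of_le one_pos hα
    have hφ : stdNormalPDF α ≠ 0 := (phi_pos α).ne'
    rw [cdf_neg, tail_eq α h0, hR]
    exact alg_identity α (stdNormalPDF α) _ h0.ne' hφ
  rw [tendsto_congr' heq]
  have hz := tendsto_one_div_pow
  have h2 : Tendsto (fun α : ℝ => 15 / α ^ 2) atTop (nhds 0) := by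
    simpa [div_eq_mul_inv] using (hz 2 (by norm_num)).const_mul (15:ℝ)
  have hup : Tendsto (fun α : ℝ => (α ^ 2 + 1) / α ^ 4) atTop (nhds 0) := by
    have h1 : ∀ᶠ α : ℝ in atTop, 1 / α ^ 2 + 1 / α ^ 4 = (α ^ 2 + 1) / α ^ 4 := by
      filter_upwards [eventually_gt_atTop 0] with α hα
      field_simp
    rw [← tendsto_congr' h1]
    simpa using (hz 2 (by norm_num)).add (hz 4 (by norm_num))
  have hRlim : Tendsto R atTop (nhds 0) := by
    refine tendsto_of_tendsto_of_tendsto_of_le_of_le' tendsto_const_nhds hup ?_ ?_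
    · filter_upwards [eventually_ge_atTop (1:ℝ)] with α hα
      have h0 : (0:ℝ) < α := lt_of_lt_of_le one_pos hα
      have hI : 0 ≤ ∫ t in Set.Ioi α, stdNormalPDF t / t ^ 8 :=
        setIntegral_nonneg measurableSet_Ioi (fun t _ => div_nonneg (phi_pos t).le (by positivity))
      exact div_nonneg (mul_nonneg (mul_nonneg (by positivity) (by positivity)) hI)
        (phi_pos α).le
    · filter_upwards [eventually_ge_atTop (1:ℝ)] with α hα
      have h0 : (0:ℝ) < α := lt_of_lt_of_le one_pos hα
      have hφ : (0:ℝ) < stdNormalPDF α := phi_pos α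
      have hb : α ^ 5 * (α ^ 2 + 1) * (∫ t in Set.Ioi α, stdNormalPDF t / t ^ 8) ≤
          α ^ 5 * (α ^ 2 + 1) * (stdNormalPDF α / α ^ 9) :=
        mul_le_mul_of_nonneg_left (I_le α hα) (by positivity)
      have h3 : α ^ 5 * (α ^ 2 + 1) * (stdNormalPDF α / α ^ 9) / stdNormalPDF α =
          (α ^ 2 + 1) / α ^ 4 := by
        field_simp
      calc R α ≤ α ^ 5 * (α ^ 2 + 1) * (stdNormalPDF α / α ^ 9) / stdNormalPDF α :=
            (div_le_div_iff_of_pos_right hφ).mpr hb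
        _ = (α ^ 2 + 1) / α ^ 4 := h3
  have h12 : Tendsto (fun _ : ℝ => (12:ℝ)) atTop (nhds 12) := tendsto_const_nhds
  have := (h12.add h2).sub (hRlim.const_mul (105:ℝ))
  simpa using this
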